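/- In the controlled Markovian observation model with cost function c, for every hypothesis i and every ε > 0 there exists η > 0 such that every pmf t on 𝒴 × 𝒰 satisfying |Σ_u t(y, u) − Σ_{ỹ,u} t(ỹ, u) p_i^u(y|ỹ)| ≤ η for every y ∈ 𝒴 also satisfies [min_{j≠i} Σ_{ỹ,u} t(ỹ, u) D(p_i^u(·|ỹ) ‖ p_j^u(·|ỹ))] / [Σ_{ỹ,u} t(ỹ, u) c(u)] < d_i*(c) + ε. -/

import Mathlib

open MeasureTheory
open scoped ENNReal

/-- The coefficient `d_i*(c)`: maximum over stationary conditional pmfs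
`q(·|·)` of the ratio of `min_{j ≠ i} Σ_{ỹ,u} μ_i^q(ỹ) q(u|ỹ)
D(p_i^u(·|ỹ) ‖ p_j^u(·|ỹ))` to the average control cost
`Σ_{ỹ,u} μ_i^q(ỹ) q(u|ỹ) c(u)`, where `μ_i^q` is the stationary pmf of the
induced Markov chain. -/
noncomputable def dstarC {Obs Ctl : Type*} [Fintype Obs] [Fintype Ctl] {M : ℕ}
    (P : Fin M → Ctl → Obs → Obs → ℝ) (c : Ctl → ℝ) (i : Fin M) : ℝ :=
  sSup {r : ℝ | ∃ (qc : Obs → Ctl → ℝ) (μ : Obs → ℝ),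
    (∀ ytil u, 0 ≤ qc ytil u) ∧ (∀ ytil, ∑ u, qc ytil u = 1) ∧
    (∀ ytil, 0 ≤ μ ytil) ∧ (∑ ytil, μ ytil = 1) ∧
    (∀ y, μ y = ∑ ytil, μ ytil * ∑ u, qc ytil u * P i u ytil y) ∧
    r = (sInf {x : ℝ | ∃ j, j ≠ i ∧
          x = ∑ ytil, ∑ u, μ ytil * qc ytil u *
            ∑ y, P i u ytil y * Real.log (P i u ytil y / P j u ytil y)})
        / (∑ ytil, ∑ u, μ ytil * qc ytil u * c u)}

/-- **Continuity of the cost-normalized inferential reward near the optimal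
occupation measures**: in the controlled Markovian observation model with cost
function `c`, for every hypothesis `i` and `ε > 0` there is `η > 0` such that
every pmf `t` on `Obs × Ctl` which is `η`-approximately stationary for the
kernel `p_i` satisfies
`[min_{j≠i} Σ_{ỹ,u} t(ỹ,u) D(p_i^u(·|ỹ) ‖ p_j^u(·|ỹ))] /
 [Σ_{ỹ,u} t(ỹ,u) c(u)] < d_i*(c) + ε`. -/
theorem stmt_17 {Obs Ctl : Type*} [Fintype Obs] [Fintype Ctl]
    [Nonempty Obs] [Nonempty Ctl]
    {M : ℕ} (hM : 2 ≤ M)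
    (P : Fin M → Ctl → Obs → Obs → ℝ)
    (hP_pos : ∀ i u ytil y, 0 < P i u ytil y)
    (hP_sum : ∀ i u ytil, ∑ y, P i u ytil y = 1)
    (c : Ctl → ℝ) (hc : ∀ u, 0 < c u)
    (i : Fin M) (ε : ℝ) (hε : 0 < ε) :
    ∃ η > (0 : ℝ), ∀ t : Obs → Ctl → ℝ,
      (∀ ytil u, 0 ≤ t ytil u) → (∑ ytil, ∑ u, t ytil u = 1) →
      (∀ y, |(∑ u, t y u) - ∑ ytil, ∑ u, t ytil u * P i u ytil y| ≤ η) →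
      (sInf {x : ℝ | ∃ j, j ≠ i ∧
          x = ∑ ytil, ∑ u, t ytil u *
            ∑ y, P i u ytil y * Real.log (P i u ytil y / P j u ytil y)})
        / (∑ ytil, ∑ u, t ytil u * c u)
      < dstarC P c i + ε := by
  classical
  set KL : Fin M → Obs → Ctl → ℝ := fun j ytil u =>
    ∑ y, P i u ytil y * Real.log (P i u ytil y / P j u ytil y) with hKLdef
  set N : Fin M → (Obs → Ctl → ℝ) → ℝ := fun j t => ∑ ytil, ∑ u, t ytil u * KL j ytil u
    with hNdef
  set D : (Obs → Ctl → ℝ) → ℝ := fun t => ∑ ytil, ∑ u, t ytil u * c u with hDdef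
  set Js : Finset (Fin M) := Finset.univ.filter (fun j : Fin M => j ≠ i) with hJsdef
  have hJs : Js.Nonempty := by
    obtain ⟨j, hj⟩ := Fintype.exists_ne_of_one_lt_card (by simp only [Fintype.card_fin]; omega) i
    exact ⟨j, by simp [hJsdef, hj]⟩
  have huniv : (Finset.univ : Finset Ctl).Nonempty := Finset.univ_nonempty
  set minc : ℝ := Finset.univ.inf' huniv c with hmincdef
  have hminc_pos : 0 < minc := by
    rw [hmincdef, Finset.lt_inf'_iff]
    exact fun u _ => hc u
  have hminc_le : ∀ u : Ctl, minc ≤ c u := fun u => Finset.inf'_le _ (Finset.mem_univ u)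
  -- sInf of the index set equals a finite inf'
  have hInf : ∀ h : Fin M → ℝ,
      sInf {x : ℝ | ∃ j, j ≠ i ∧ x = h j} = Js.inf' hJs h := by
    intro h
    rw [Finset.inf'_eq_csInf_image]
    congr 1
    ext x
    simp only [Set.mem_setOf_eq, Set.mem_image, Finset.coe_filter, Finset.mem_univ, true_and,
      hJsdef]
    constructor
    · rintro ⟨j, hj, rfl⟩; exact ⟨j, hj, rfl⟩
    · rintro ⟨j, hj, rfl⟩; exact ⟨j, hj, rfl⟩
  -- Bounded above
  obtain ⟨j0, hj0⟩ := id hJs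
  have hj0i : j0 ≠ i := by simpa [hJsdef] using hj0
  set B : ℝ := ∑ ytil, ∑ u, |KL j0 ytil u| with hBdef
  have hB0 : 0 ≤ B := Finset.sum_nonneg fun _ _ => Finset.sum_nonneg fun _ _ => abs_nonneg _
  have hKLB : ∀ ytil u, KL j0 ytil u ≤ B := by
    intro ytil u
    calc KL j0 ytil u ≤ |KL j0 ytil u| := le_abs_self _
    _ ≤ ∑ u, |KL j0 ytil u| :=
        Finset.single_le_sum (f := fun u => |KL j0 ytil u|)
          (fun _ _ => abs_nonneg _) (Finset.mem_univ u)
    _ ≤ B := Finset.single_le_sum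
        (f := fun ytil => ∑ u, |KL j0 ytil u|)
        (fun _ _ => Finset.sum_nonneg fun _ _ => abs_nonneg _) (Finset.mem_univ ytil)
  -- generic bound for the ratio
  have hratio : ∀ w : Obs → Ctl → ℝ, (∀ y u, 0 ≤ w y u) → (∑ y, ∑ u, w y u = 1) →
      Js.inf' hJs (fun j => ∑ ytil, ∑ u, w ytil u * KL j ytil u)
        / (∑ ytil, ∑ u, w ytil u * c u) ≤ B / minc := by
    intro w hw0 hw1
    have hnum : Js.inf' hJs (fun j => ∑ ytil, ∑ u, w ytil u * KL j ytil u)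
        ≤ B := by
      refine le_trans (Finset.inf'_le _ hj0) ?_
      calc ∑ ytil, ∑ u, w ytil u * KL j0 ytil u
          ≤ ∑ ytil, ∑ u, w ytil u * B := by
            refine Finset.sum_le_sum fun ytil _ => Finset.sum_le_sum fun u _ => ?_
            exact mul_le_mul_of_nonneg_left (hKLB ytil u) (hw0 ytil u)
        _ = B := by simp only [← Finset.sum_mul]; rw [hw1, one_mul]
    have hden : minc ≤ ∑ ytil, ∑ u, w ytil u * c u := by
      calc minc = ∑ ytil, ∑ u, w ytil u * minc := by
            simp only [← Finset.sum_mul]; rw [hw1, one_mul]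
        _ ≤ ∑ ytil, ∑ u, w ytil u * c u := by
            refine Finset.sum_le_sum fun ytil _ => Finset.sum_le_sum fun u _ => ?_
            exact mul_le_mul_of_nonneg_left (hminc_le u) (hw0 ytil u)
    have hdenpos : 0 < ∑ ytil, ∑ u, w ytil u * c u := lt_of_lt_of_le hminc_pos hden
    exact div_le_div₀ hB0 hnum hminc_pos hden
  -- the defining set of `dstarC` is bounded above
  have hbdd : BddAbove {r : ℝ | ∃ (qc : Obs → Ctl → ℝ) (μ : Obs → ℝ),
      (∀ ytil u, 0 ≤ qc ytil u) ∧ (∀ ytil, ∑ u, qc ytil u = 1) ∧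
      (∀ ytil, 0 ≤ μ ytil) ∧ (∑ ytil, μ ytil = 1) ∧
      (∀ y, μ y = ∑ ytil, μ ytil * ∑ u, qc ytil u * P i u ytil y) ∧
      r = (sInf {x : ℝ | ∃ j, j ≠ i ∧
            x = ∑ ytil, ∑ u, μ ytil * qc ytil u *
              ∑ y, P i u ytil y * Real.log (P i u ytil y / P j u ytil y)})
          / (∑ ytil, ∑ u, μ ytil * qc ytil u * c u)} := by
    refine ⟨B / minc, ?_⟩
    rintro r ⟨qc, μ, hqc0, hμ0', hμ0, hμ1, _, rfl⟩
    have hw0 : ∀ y u, 0 ≤ μ y * qc y u := fun y u => mul_nonneg (hμ0 y) (hqc0 y u)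
    have hw1 : ∑ y, ∑ u, μ y * qc y u = 1 := by
      have h : ∀ y, ∑ u, μ y * qc y u = μ y := by
        intro y; rw [← Finset.mul_sum, hμ0' y, mul_one]
      simp only [h]; exact hμ1
    rw [hInf]
    exact hratio (fun y u => μ y * qc y u) hw0 hw1
  -- stationary occupation measures give values at most `dstarC`
  have hKmem : ∀ t : Obs → Ctl → ℝ, (∀ y u, 0 ≤ t y u) → (∑ y, ∑ u, t y u = 1) →
      (∀ y, (∑ u, t y u) = ∑ ytil, ∑ u, t ytil u * P i u ytil y) →
      Js.inf' hJs (fun j => N j t) / D t ≤ dstarC P c i := by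
    intro t ht0 ht1 hstat
    set μ : Obs → ℝ := fun y => ∑ u, t y u with hμdef
    set qc : Obs → Ctl → ℝ := fun y u =>
      if μ y = 0 then (Fintype.card Ctl : ℝ)⁻¹ else t y u / μ y with hqcdef
    have hμ0 : ∀ y, 0 ≤ μ y := fun y => Finset.sum_nonneg fun u _ => ht0 y u
    have hμq : ∀ y u, μ y * qc y u = t y u := by
      intro y u
      by_cases h : μ y = 0
      · have ht : t y u = 0 :=
          (Finset.sum_eq_zero_iff_of_nonneg (fun u _ => ht0 y u)).mp h u (Finset.mem_univ u)
        simp [hqcdef, h, ht]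
      · rw [hqcdef]; simp only [if_neg h]
        field_simp
    have hqc0 : ∀ y u, 0 ≤ qc y u := by
      intro y u; by_cases h : μ y = 0
      · rw [hqcdef]; simp only [if_pos h]; positivity
      · rw [hqcdef]; simp only [if_neg h]; exact div_nonneg (ht0 y u) (hμ0 y)
    have hqc1 : ∀ y, ∑ u, qc y u = 1 := by
      intro y; by_cases h : μ y = 0
      · rw [hqcdef]; simp only [if_pos h]
        rw [Finset.sum_const, nsmul_eq_mul, Finset.card_univ,
          mul_inv_cancel₀ (by exact_mod_cast Fintype.card_ne_zero)]
      · rw [hqcdef]; simp only [if_neg h]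
        rw [← Finset.sum_div]
        exact div_self h
    have hstat' : ∀ y, μ y = ∑ ytil, μ ytil * ∑ u, qc ytil u * P i u ytil y := by
      intro y
      have h : ∀ ytil, μ ytil * ∑ u, qc ytil u * P i u ytil y
          = ∑ u, t ytil u * P i u ytil y := by
        intro ytil
        rw [Finset.mul_sum]
        exact Finset.sum_congr rfl fun u _ => by rw [← mul_assoc, hμq]
      simp only [h]
      exact hstat y
    have hμ1 : ∑ ytil, μ ytil = 1 := ht1
    unfold dstarC
    refine le_csSup hbdd ⟨qc, μ, hqc0, hqc1, hμ0, hμ1, hstat', ?_⟩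
    simp only [hμq]
    rw [hInf]
  -- the compact simplex
  set K : Set (Obs → Ctl → ℝ) := {t | (∀ y u, 0 ≤ t y u) ∧ ∑ y, ∑ u, t y u = 1} with hKdef
  have hKcomp : IsCompact K := by
    have himg : K = (fun (s : Obs × Ctl → ℝ) => fun (y : Obs) (u : Ctl) => s (y, u)) ''
        stdSimplex ℝ (Obs × Ctl) := by
      ext t
      constructor
      · rintro ⟨h0, h1⟩
        refine ⟨fun p => t p.1 p.2, ⟨fun p => h0 p.1 p.2, ?_⟩, rfl⟩
        rw [Fintype.sum_prod_type]; exact h1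
      · rintro ⟨s, ⟨h0, h1⟩, rfl⟩
        refine ⟨fun y u => h0 (y, u), ?_⟩
        rw [← Fintype.sum_prod_type]; exact h1
    rw [himg]
    exact (isCompact_stdSimplex ℝ _).image
      (continuous_pi fun y => continuous_pi fun u => continuous_apply _)
  -- continuity facts
  have contEval : ∀ (y : Obs) (u : Ctl), Continuous fun t : Obs → Ctl → ℝ => t y u :=
    fun y u => (continuous_apply u).comp (continuous_apply y)
  have contN : ∀ j, Continuous (N j) := by
    intro j
    rw [hNdef]
    exact continuous_finset_sum _ fun y _ => continuous_finset_sum _ fun u _ =>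
      (contEval y u).mul continuous_const
  have contD : Continuous D := by
    rw [hDdef]
    exact continuous_finset_sum _ fun y _ => continuous_finset_sum _ fun u _ =>
      (contEval y u).mul continuous_const
  set F : (Obs → Ctl → ℝ) → ℝ := fun t => Js.inf' hJs (fun j => N j t) / max (D t) minc
    with hFdef
  have contF : Continuous F := by
    rw [hFdef]
    apply Continuous.div
    · exact Continuous.finset_inf'_apply hJs fun j _ => contN j
    · exact contD.max continuous_const
    · intro t; exact ne_of_gt (lt_max_of_lt_right hminc_pos)
  set g : (Obs → Ctl → ℝ) → ℝ := fun t =>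
    ∑ y, |(∑ u, t y u) - ∑ ytil, ∑ u, t ytil u * P i u ytil y| with hgdef
  have contg : Continuous g := by
    rw [hgdef]
    refine continuous_finset_sum _ fun y _ => Continuous.abs (Continuous.sub ?_ ?_)
    · exact continuous_finset_sum _ fun u _ => contEval y u
    · exact continuous_finset_sum _ fun ytil _ => continuous_finset_sum _ fun u _ =>
        (contEval ytil u).mul continuous_const
  have hDge : ∀ t, t ∈ K → minc ≤ D t := by
    rintro t ⟨h0, h1⟩
    calc minc = ∑ y, ∑ u, t y u * minc := by
          simp only [← Finset.sum_mul]; rw [h1, one_mul]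
      _ ≤ D t := Finset.sum_le_sum fun y _ => Finset.sum_le_sum fun u _ =>
          mul_le_mul_of_nonneg_left (hminc_le u) (h0 y u)
  have hFD : ∀ t, t ∈ K → F t = Js.inf' hJs (fun j => N j t) / D t := by
    intro t htK
    rw [hFdef]
    simp only
    rw [max_eq_left (hDge t htK)]
  have hFeq : ∀ t, t ∈ K → F t = (sInf {x : ℝ | ∃ j, j ≠ i ∧
        x = ∑ ytil, ∑ u, t ytil u *
          ∑ y, P i u ytil y * Real.log (P i u ytil y / P j u ytil y)})
      / (∑ ytil, ∑ u, t ytil u * c u) := by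
    intro t htK
    rw [hFD t htK, hInf]
  set Cset : Set (Obs → Ctl → ℝ) := K ∩ F ⁻¹' Set.Ici (dstarC P c i + ε) with hCdef
  have hCcomp : IsCompact Cset := hKcomp.inter_right (isClosed_Ici.preimage contF)
  have hFlt : ∀ t, t ∈ K → t ∉ Cset → F t < dstarC P c i + ε := by
    intro t htK htC
    by_contra h
    exact htC ⟨htK, le_of_not_gt h⟩
  rcases Cset.eq_empty_or_nonempty with hCe | hCne
  · refine ⟨1, one_pos, ?_⟩
    intro t ht0 ht1 _
    have htK : t ∈ K := ⟨ht0, ht1⟩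
    have hlt := hFlt t htK (by simp [hCe])
    rwa [hFeq t htK] at hlt
  · obtain ⟨x0, hx0C, hx0min⟩ := hCcomp.exists_isMinOn hCne contg.continuousOn
    have hgx0 : 0 < g x0 := by
      have hg0 : 0 ≤ g x0 := Finset.sum_nonneg fun _ _ => abs_nonneg _
      rcases hg0.lt_or_eq with h | h
      · exact h
      · exfalso
        have hgz : g x0 = 0 := h.symm
        rw [hgdef] at hgz
        have hstat : ∀ y, (∑ u, x0 y u) = ∑ ytil, ∑ u, x0 ytil u * P i u ytil y := by
          intro y
          have h2 := (Finset.sum_eq_zero_iff_of_nonneg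
            (fun _ _ => abs_nonneg _)).mp hgz y (Finset.mem_univ y)
          have h3 := abs_eq_zero.mp h2
          linarith
        have hK0 := hx0C.1
        have hle := hKmem x0 hK0.1 hK0.2 hstat
        have hge : dstarC P c i + ε ≤ F x0 := hx0C.2
        rw [hFD x0 hK0] at hge
        linarith
    refine ⟨g x0 / (Fintype.card Obs + 1), by positivity, ?_⟩
    intro t ht0 ht1 hterr
    have htK : t ∈ K := ⟨ht0, ht1⟩
    have hcard : (0:ℝ) < (Fintype.card Obs : ℝ) + 1 := by positivity
    have hx0min' : ∀ y ∈ Cset, g x0 ≤ g y := fun y hy => hx0min hy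
    have hgt : g t < g x0 := by
      have hsum : g t ≤ ∑ _y : Obs, g x0 / ((Fintype.card Obs : ℝ) + 1) := by
        rw [hgdef]
        exact Finset.sum_le_sum fun y _ => hterr y
      have heq : ∑ _y : Obs, g x0 / ((Fintype.card Obs : ℝ) + 1)
          = g x0 * ((Fintype.card Obs : ℝ) / ((Fintype.card Obs : ℝ) + 1)) := by
        rw [Finset.sum_const, nsmul_eq_mul, Finset.card_univ]; ring
      have hlt1 : (Fintype.card Obs : ℝ) / ((Fintype.card Obs : ℝ) + 1) < 1 := by
        rw [div_lt_one hcard]; linarith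
      calc g t ≤ g x0 * ((Fintype.card Obs : ℝ) / ((Fintype.card Obs : ℝ) + 1)) := by
            rw [← heq]; exact hsum
        _ < g x0 * 1 := by exact mul_lt_mul_of_pos_left hlt1 hgx0
        _ = g x0 := mul_one _
    have htC : t ∉ Cset := fun hmem => absurd (hx0min' t hmem) (not_le.mpr hgt)
    have hlt := hFlt t htK htC
    rwa [hFeq t htK] at hlt
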